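/- Let G₁ and G₂ be finite graphs on disjoint nonempty vertex sets, let x be a vertex of G₁, and let G be the graph obtained by substituting G₂ for x in G₁: the vertex set of G is (V(G₁) ∖ {x}) ∪ V(G₂); two vertices of V(G₁) ∖ {x} are adjacent in G iff they are adjacent in G₁; two vertices of V(G₂) are adjacent in G iff they are adjacent in G₂; and a vertex u ∈ V(G₁) ∖ {x} is adjacent in G to every vertex of V(G₂) if u is adjacent to x in G₁, and to no vertex of V(G₂) otherwise. If G₁ and G₂ are both bull-free, then G is bull-free. -/
import Mathlib


open SimpleGraph

/-- The bull: a path 0-1-2-3 together with vertex 4 adjacent to the middle vertices 1 and 2. -/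
def bull : SimpleGraph (Fin 5) :=
  SimpleGraph.fromEdgeSet {s(0, 1), s(1, 2), s(2, 3), s(1, 4), s(2, 4)}

/-- A graph is bull-free if no induced subgraph is isomorphic to the bull,
i.e. there is no graph embedding of the bull into it. -/
def BullFree {V : Type*} (G : SimpleGraph V) : Prop :=
  ¬ Nonempty (bull ↪g G)

/-- A graph is perfect if every induced subgraph has chromatic number equal to clique number. -/
def IsPerfect {V : Type*} (G : SimpleGraph V) : Prop :=
  ∀ s : Set V, (G.induce s).chromaticNumber = ((G.induce s).cliqueNum : ℕ∞)

/-- `X` is a homogeneous set in `G`: `1 < |X| < |V(G)|` and each vertex outside `X`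
is adjacent to all of `X` or to none of `X`. -/
def IsHomogeneousSet {V : Type*} (G : SimpleGraph V) (X : Set V) : Prop :=
  1 < X.ncard ∧ X.ncard < Nat.card V ∧
    ∀ v ∉ X, (∀ x ∈ X, G.Adj v x) ∨ (∀ x ∈ X, ¬ G.Adj v x)

/-- A graph is prime if it has no homogeneous set. -/
def IsPrimeGraph {V : Type*} (G : SimpleGraph V) : Prop :=
  ¬ ∃ X : Set V, IsHomogeneousSet G X

/-- A graph is N-perfect if for every vertex `v`, the subgraph induced on the neighborhood
of `v` or the subgraph induced on the complement of the neighborhood of `v` is perfect. -/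
def IsNPerfect {V : Type*} (G : SimpleGraph V) : Prop :=
  ∀ v : V, IsPerfect (G.induce (G.neighborSet v)) ∨ IsPerfect (G.induce (G.neighborSet v)ᶜ)

instance : DecidableRel bull.Adj := fun a b =>
  decidable_of_iff ((s(a,b) = s(0,1) ∨ s(a,b) = s(1,2) ∨ s(a,b) = s(2,3) ∨ s(a,b) = s(1,4)
      ∨ s(a,b) = s(2,4)) ∧ a ≠ b)
    (by simp [bull, SimpleGraph.fromEdgeSet_adj, Set.mem_insert_iff])

/-- The bull has no nontrivial module: if `p` selects at least two vertices and misses at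
least one, then some unselected vertex `c` has mixed adjacency to the selected set. -/
lemma bull_no_module (p : Fin 5 → Bool) (h2 : ∃ a b, a ≠ b ∧ p a ∧ p b)
    (h1 : ∃ c, p c = false) :
    ∃ a b c, p a ∧ p b ∧ p c = false ∧ bull.Adj c a ∧ ¬ bull.Adj c b := by
  revert h2 h1; revert p; decide

/-- Substituting a bull-free graph `G₂` for a vertex `x` of a bull-free graph
`G₁` yields a bull-free graph.  The substituted graph is represented as a graph `G` on the
disjoint union `{y : V₁ // y ≠ x} ⊕ V₂`, whose adjacency is characterized by the three
hypotheses `hll`, `hrr` and `hlr`. -/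
theorem stmt11 {V₁ V₂ : Type*} [Fintype V₁] [Fintype V₂] [Nonempty V₁] [Nonempty V₂]
    (G₁ : SimpleGraph V₁) (G₂ : SimpleGraph V₂) (x : V₁)
    (G : SimpleGraph ({y : V₁ // y ≠ x} ⊕ V₂))
    (hll : ∀ u v : {y : V₁ // y ≠ x}, G.Adj (Sum.inl u) (Sum.inl v) ↔ G₁.Adj u v)
    (hrr : ∀ u v : V₂, G.Adj (Sum.inr u) (Sum.inr v) ↔ G₂.Adj u v)
    (hlr : ∀ (u : {y : V₁ // y ≠ x}) (w : V₂), G.Adj (Sum.inl u) (Sum.inr w) ↔ G₁.Adj u x)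
    (hbf1 : BullFree G₁) (hbf2 : BullFree G₂) :
    BullFree G := by
  rintro ⟨f⟩
  by_cases hall : ∀ i : Fin 5, (f i).isRight
  · -- all vertices land in `V₂`: a bull in `G₂`
    choose g hg using fun i => Sum.isRight_iff.mp (hall i)
    refine hbf2 ⟨⟨⟨g, fun i j hij => f.injective (by rw [hg i, hg j, hij])⟩, ?_⟩⟩
    intro i j
    have := f.map_rel_iff (a := i) (b := j)
    rw [hg i, hg j, hrr] at this
    exact this
  · push_neg at hall
    obtain ⟨c₀, hc₀⟩ := hall
    by_cases h2 : ∃ a b : Fin 5, a ≠ b ∧ (f a).isRight ∧ (f b).isRight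
    · -- at least two on the right and one on the left: contradiction with primality
      obtain ⟨a, b, c, hpa, hpb, hpc, hca, hncb⟩ :=
        bull_no_module (fun i => (f i).isRight) h2
          ⟨c₀, Bool.eq_false_iff.mpr hc₀⟩
      obtain ⟨wa, hwa⟩ := Sum.isRight_iff.mp hpa
      obtain ⟨wb, hwb⟩ := Sum.isRight_iff.mp hpb
      rcases hfc : f c with uc | wc
      · have h1 : G₁.Adj uc x := by
          have := f.map_rel_iff.mpr hca
          rw [hfc, hwa, hlr] at this
          exact this
        exact hncb (f.map_rel_iff.mp (by rw [hfc, hwb]; exact (hlr uc wb).mpr h1))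
      · rw [hfc] at hpc; simp at hpc
    · -- at most one vertex on the right: collapse it to `x`, a bull in `G₁`
      push_neg at h2
      have hinj : Function.Injective
          (fun i => Sum.elim (fun u : {y : V₁ // y ≠ x} => u.val) (fun _ : V₂ => x) (f i)) := by
        intro i j hij
        simp only at hij
        rcases hi : f i with u | w <;> rcases hj : f j with v | w' <;>
          rw [hi, hj] at hij <;> simp only [Sum.elim_inl, Sum.elim_inr] at hij
        · exact f.injective (by rw [hi, hj, Subtype.ext hij])
        · exact absurd hij u.2
        · exact absurd hij.symm v.2
        · by_contra hne
          exact h2 i j hne (by simp [hi]) (by simp [hj])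
      refine hbf1 ⟨⟨⟨_, hinj⟩, ?_⟩⟩
      intro i j
      simp only [Function.Embedding.coeFn_mk]
      rcases hi : f i with u | w <;> rcases hj : f j with v | w' <;>
        simp only [Sum.elim_inl, Sum.elim_inr]
      · rw [← hll u v, ← hi, ← hj, f.map_rel_iff]
      · rw [← hlr u w', ← hi, ← hj, f.map_rel_iff]
      · rw [SimpleGraph.adj_comm, ← hlr v w, ← hi, ← hj, f.map_rel_iff,
          SimpleGraph.adj_comm]
      · have hij : i = j := by
          by_contra hne
          exact h2 i j hne (by simp [hi]) (by simp [hj])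
        subst hij
        simp
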